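/- Let k₁ > 1 > k₂ > 0 with k₁ + k₂ = 2. Consider α, β ∈ (0, π/2) constrained by α/√k₁ + β/√k₂ = π/2. Then there exists such a pair (α, β) with tan α · tan β = √(k₁k₂). -/

import Mathlib

open Real
open Filter

/-- Let `k₁ > 1 > k₂ > 0` with `k₁ + k₂ = 2`. Then there are `α, β ∈ (0, π/2)` with
`α/√k₁ + β/√k₂ = π/2` and `tan α · tan β = √(k₁k₂)`. -/
theorem exists_tan_solution (k₁ k₂ : ℝ)
    (hk₁ : 1 < k₁) (hk₂ : 0 < k₂) (hk₂' : k₂ < 1) (hsum : k₁ + k₂ = 2) :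
    ∃ α β : ℝ, α ∈ Set.Ioo (0 : ℝ) (π / 2) ∧ β ∈ Set.Ioo (0 : ℝ) (π / 2) ∧
      α / Real.sqrt k₁ + β / Real.sqrt k₂ = π / 2 ∧
      Real.tan α * Real.tan β = Real.sqrt (k₁ * k₂) := by
  have hπ := Real.pi_pos
  have hk₁0 : (0:ℝ) < k₁ := by linarith
  have hs1 : 1 < Real.sqrt k₁ := by
    have := Real.sqrt_lt_sqrt (by norm_num : (0:ℝ) ≤ 1) hk₁
    simpa using this
  have hs1pos : (0:ℝ) < Real.sqrt k₁ := by linarith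
  have hs2pos : 0 < Real.sqrt k₂ := Real.sqrt_pos.mpr hk₂
  have hs2lt : Real.sqrt k₂ < 1 := by
    have := Real.sqrt_lt_sqrt hk₂.le hk₂'
    simpa using this
  set c := Real.sqrt (k₁ * k₂) with hc
  have hcpos : 0 < c := Real.sqrt_pos.mpr (mul_pos hk₁0 hk₂)
  set g : ℝ → ℝ := fun x => Real.sqrt k₂ * (π/2 - x / Real.sqrt k₁) with hg
  -- g maps [0, π/2] into (0, π/2)
  have hgmem : ∀ x ∈ Set.Icc (0:ℝ) (π/2), g x ∈ Set.Ioo (0:ℝ) (π/2) := by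
    intro x hx
    have hx0 := hx.1
    have hx2 := hx.2
    constructor
    · apply mul_pos hs2pos
      have h1 : x / Real.sqrt k₁ ≤ x := div_le_self hx0 hs1.le
      have h2 : x / Real.sqrt k₁ ≤ (π/2) / Real.sqrt k₁ := by gcongr
      have h3 : (π/2) / Real.sqrt k₁ < π/2 := div_lt_self (by linarith) hs1
      linarith
    · have h1 : (0:ℝ) ≤ x / Real.sqrt k₁ := div_nonneg hx0 hs1pos.le
      have h2 : g x ≤ Real.sqrt k₂ * (π/2) := by
        apply mul_le_mul_of_nonneg_left _ hs2pos.le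
        linarith
      have h3 : Real.sqrt k₂ * (π/2) < 1 * (π/2) := by
        apply mul_lt_mul_of_pos_right hs2lt (by linarith)
      linarith
  set f : ℝ → ℝ := fun x => Real.tan x * Real.tan (g x) with hf
  have hcos : ∀ y ∈ Set.Ioo (0:ℝ) (π/2), Real.cos y ≠ 0 := by
    intro y hy
    exact (Real.cos_pos_of_mem_Ioo ⟨by linarith [hy.1], hy.2⟩).ne'
  have hgcont : Continuous g := by
    apply Continuous.mul continuous_const
    exact (continuous_const.sub (continuous_id.div_const _))
  -- continuity of f at points of [0, π/2)
  have hfcont : ∀ x ∈ Set.Ico (0:ℝ) (π/2), ContinuousAt f x := by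
    intro x hx
    have hx' : x ∈ Set.Icc (0:ℝ) (π/2) := ⟨hx.1, hx.2.le⟩
    have h1 : ContinuousAt Real.tan x := by
      rw [Real.continuousAt_tan]
      exact (Real.cos_pos_of_mem_Ioo ⟨by linarith [hx.1], hx.2⟩).ne'
    have h2 : ContinuousAt Real.tan (g x) := by
      rw [Real.continuousAt_tan]
      exact hcos _ (hgmem x hx')
    exact h1.mul (h2.comp hgcont.continuousAt)
  -- f tends to atTop at π/2 from the left
  have hgπ : g (π/2) ∈ Set.Ioo (0:ℝ) (π/2) := by
    constructor
    · apply mul_pos hs2pos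
      have : π/2 / Real.sqrt k₁ < π/2 := div_lt_self (by linarith) hs1
      linarith
    · have h1 : (0:ℝ) ≤ π/2 / Real.sqrt k₁ := div_nonneg (by linarith) hs1pos.le
      have h2 : g (π/2) ≤ Real.sqrt k₂ * (π/2) :=
        mul_le_mul_of_nonneg_left (by linarith) hs2pos.le
      have h3 : Real.sqrt k₂ * (π/2) < 1 * (π/2) :=
        mul_lt_mul_of_pos_right hs2lt (by linarith)
      linarith
  have htanπ : 0 < Real.tan (g (π/2)) :=
    Real.tan_pos_of_pos_of_lt_pi_div_two hgπ.1 hgπ.2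
  have htop : Tendsto f (nhdsWithin (π/2) (Set.Iio (π/2))) atTop := by
    apply Filter.Tendsto.atTop_mul_pos htanπ
    · exact Real.tendsto_tan_pi_div_two
    · have ht : ContinuousAt Real.tan (g (π/2)) := by
        rw [Real.continuousAt_tan]; exact hcos _ hgπ
      exact ht.tendsto.comp hgcont.continuousWithinAt
  -- get b ∈ (0, π/2) with f b ≥ c
  obtain ⟨b, hb1, hb2⟩ : ∃ b, c ≤ f b ∧ b ∈ Set.Ioo (0:ℝ) (π/2) := by
    have h1 : ∀ᶠ x in nhdsWithin (π/2) (Set.Iio (π/2)), c ≤ f x :=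
      htop.eventually (eventually_ge_atTop c)
    have h2 : ∀ᶠ x in nhdsWithin (π/2) (Set.Iio (π/2)), x ∈ Set.Ioo (0:ℝ) (π/2) := by
      have hmem : Set.Ioo (0:ℝ) (π/2) ∈ nhdsWithin (π/2) (Set.Iio (π/2)) :=
        Ioo_mem_nhdsLT_of_mem (show (π/2:ℝ) ∈ Set.Ioc (0:ℝ) (π/2) from ⟨by linarith, le_refl _⟩)
      exact Filter.eventually_of_mem hmem fun x hx => hx
    exact (h1.and h2).exists
  -- IVT on [0, b]
  have hcontOn : ContinuousOn f (Set.Icc 0 b) := by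
    intro x hx
    exact (hfcont x ⟨hx.1, lt_of_le_of_lt hx.2 hb2.2⟩).continuousWithinAt
  have hf0 : f 0 = 0 := by simp [hf]
  have hivt := intermediate_value_Icc hb2.1.le hcontOn
  have hcmem : c ∈ Set.Icc (f 0) (f b) := ⟨by rw [hf0]; exact hcpos.le, hb1⟩
  obtain ⟨α, hα, hfα⟩ := hivt hcmem
  have hα0 : 0 < α := by
    rcases lt_or_eq_of_le hα.1 with h | h
    · exact h
    · exfalso
      rw [← h] at hfα
      rw [hf0] at hfα
      linarith
  refine ⟨α, g α, ⟨hα0, lt_of_le_of_lt hα.2 hb2.2⟩, hgmem α ⟨hα0.le, (lt_of_le_of_lt hα.2 hb2.2).le⟩, ?_, hfα⟩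
  simp only [hg]
  field_simp [hg]
  ring
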